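/- arXiv:1711.01335 — 5 statements merged into one kernel-verified Lean document; each statement's English description precedes it below -/
import Mathlib

section
/- Let y : Fin n → ℝ with values in [0,1], mean m = (∑ y_j)/n, and y' obtained by changing one coordinate (still in [0,1]) with mean m'. Then |∑_j (y_j - m)^2 - ∑_j (y'_j - m')^2| ≤ 1 + 2 + 1/n, i.e., the within-group sum of squared errors of a single group has sensitivity at most 3 + 1/n ≤ 4 when the changed point stays in the group. -/
theorem single_group_sse_sensitivity {n : ℕ} (hn : 1 ≤ n) (y y' : Fin n → ℝ)
    (hy : ∀ j, y j ∈ Set.Icc (0 : ℝ) 1) (hy' : ∀ j, y' j ∈ Set.Icc (0 : ℝ) 1)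
    (hneighbor : ∃ i, y i ≠ y' i ∧ ∀ j, j ≠ i → y j = y' j) :
    |(∑ j, (y j - (∑ j, y j) / n) ^ 2) - ∑ j, (y' j - (∑ j, y' j) / n) ^ 2| ≤ 1 + 2 + 1 / n := by
  obtain ⟨i, hi, hoth⟩ := hneighbor
  have hn0 : (0:ℝ) < n := by exact_mod_cast hn
  have hne : (n:ℝ) ≠ 0 := ne_of_gt hn0
  set S := ∑ j, y j with hS
  set S' := ∑ j, y' j with hS'
  have key : ∀ (z : Fin n → ℝ), ∑ j, (z j - (∑ j, z j) / n) ^ 2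
      = (∑ j, (z j)^2) - (∑ j, z j)^2 / n := by
    intro z
    have : ∑ j, (z j - (∑ j, z j) / n) ^ 2
        = ∑ j, ((z j)^2 - 2 * ((∑ j, z j)/n) * z j + ((∑ j, z j)/n)^2) := by
      apply Finset.sum_congr rfl; intro j _; ring
    rw [this, Finset.sum_add_distrib, Finset.sum_sub_distrib, ← Finset.mul_sum,
      Finset.sum_const, Finset.card_univ, Fintype.card_fin, nsmul_eq_mul]
    field_simp
    ring
  rw [key y, key y']
  have hsq : (∑ j, (y j)^2) - ∑ j, (y' j)^2 = (y i)^2 - (y' i)^2 := by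
    rw [← Finset.sum_sub_distrib]
    rw [Finset.sum_eq_single i]
    · intro j _ hj; rw [hoth j hj]; ring
    · intro h; exact absurd (Finset.mem_univ i) h
  have hSdiff : S - S' = y i - y' i := by
    rw [hS, hS', ← Finset.sum_sub_distrib]
    rw [Finset.sum_eq_single i]
    · intro j _ hj; rw [hoth j hj]; ring
    · intro h; exact absurd (Finset.mem_univ i) h
  have hS0 : 0 ≤ S := Finset.sum_nonneg fun j _ => (hy j).1
  have hSn : S ≤ n := by
    calc S ≤ ∑ _j : Fin n, (1:ℝ) := Finset.sum_le_sum fun j _ => (hy j).2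
    _ = n := by simp
  have hS'0 : 0 ≤ S' := Finset.sum_nonneg fun j _ => (hy' j).1
  have hS'n : S' ≤ n := by
    calc S' ≤ ∑ _j : Fin n, (1:ℝ) := Finset.sum_le_sum fun j _ => (hy' j).2
    _ = n := by simp
  have e : ((∑ j, (y j)^2) - S^2 / n) - ((∑ j, (y' j)^2) - S'^2 / n)
      = ((y i)^2 - (y' i)^2) - (S - S') * (S + S') / n := by
    have := hsq
    field_simp
    nlinarith [hsq]
  rw [e, hSdiff]
  have h1 : |(y i)^2 - (y' i)^2| ≤ 1 := by
    rw [abs_le]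
    obtain ⟨a, b⟩ := hy i; obtain ⟨c, d⟩ := hy' i
    constructor <;> nlinarith
  have h2 : |(y i - y' i) * (S + S') / n| ≤ 2 := by
    rw [abs_div, abs_mul, abs_of_pos hn0, div_le_iff₀ hn0]
    have ha : |y i - y' i| ≤ 1 := by
      rw [abs_le]; obtain ⟨a, b⟩ := hy i; obtain ⟨c, d⟩ := hy' i
      constructor <;> linarith
    have hb : |S + S'| ≤ 2 * n := by
      rw [abs_le]; constructor <;> linarith
    calc |y i - y' i| * |S + S'| ≤ 1 * (2 * n) :=
          mul_le_mul ha hb (abs_nonneg _) zero_le_one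
      _ = 2 * n := by ring
  have h3 : (0:ℝ) ≤ 1 / n := by positivity
  calc |((y i)^2 - (y' i)^2) - (y i - y' i) * (S + S') / n|
      ≤ |(y i)^2 - (y' i)^2| + |(y i - y' i) * (S + S') / n| := abs_sub _ _
    _ ≤ 1 + 2 := by linarith
    _ ≤ 1 + 2 + 1 / n := by linarith
end

section
/- Consider a database D of n rows, each row consisting of a group label in Fin k and a value in [0,1]. Define SSE(D) = ∑_{i=1}^k ∑_{j=1}^{n_i} (y_{ij} - ȳ_i)^2 where ȳ_i is the mean of group i and n_i its size. Then for any two neighboring databases D, D' (differing in exactly one row, possibly changing both its group and value), |SSE(D) - SSE(D')| ≤ 7. -/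
open Finset

noncomputable def groupSize {n k : ℕ} (D : Fin n → Fin k × ℝ) (i : Fin k) : ℕ :=
  (Finset.univ.filter (fun j => (D j).1 = i)).card

noncomputable def groupMean {n k : ℕ} (D : Fin n → Fin k × ℝ) (i : Fin k) : ℝ :=
  (∑ j ∈ Finset.univ.filter (fun j => (D j).1 = i), (D j).2) / (groupSize D i)

noncomputable def grandMean {n k : ℕ} (D : Fin n → Fin k × ℝ) : ℝ :=
  (∑ j, (D j).2) / n

noncomputable def SSE {n k : ℕ} (D : Fin n → Fin k × ℝ) : ℝ :=
  ∑ i, ∑ j ∈ Finset.univ.filter (fun j => (D j).1 = i), ((D j).2 - groupMean D i) ^ 2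

noncomputable def SSA {n k : ℕ} (D : Fin n → Fin k × ℝ) : ℝ :=
  ∑ i, (groupSize D i : ℝ) * (groupMean D i - grandMean D) ^ 2

/-- Neighboring databases: differ in exactly one row. -/
def Neighboring {n k : ℕ} (D D' : Fin n → Fin k × ℝ) : Prop :=
  ∃ r, ∀ j, j ≠ r → D j = D' j

noncomputable def Fterm {n k : ℕ} (D : Fin n → Fin k × ℝ) (i : Fin k) : ℝ :=
  (∑ j ∈ Finset.univ.filter (fun j => (D j).1 = i), (D j).2) ^ 2 / (groupSize D i : ℝ)

lemma group_sse {ι : Type*} (s : Finset ι) (g : ι → ℝ) :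
    ∑ j ∈ s, (g j - (∑ j ∈ s, g j) / (s.card : ℝ)) ^ 2
      = ∑ j ∈ s, (g j) ^ 2 - (∑ j ∈ s, g j) ^ 2 / (s.card : ℝ) := by
  rcases s.eq_empty_or_nonempty with h | h
  · simp [h]
  · have hc : (0:ℝ) < s.card := by exact_mod_cast Finset.card_pos.mpr h
    set S := ∑ j ∈ s, g j with hS
    have expand : ∀ j ∈ s, (g j - S / s.card) ^ 2
        = (g j) ^ 2 - (2 * (S / s.card)) * g j + (S / s.card) ^ 2 := fun j _ => by ring
    rw [Finset.sum_congr rfl expand]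
    rw [Finset.sum_add_distrib, Finset.sum_sub_distrib, ← Finset.mul_sum, Finset.sum_const,
      nsmul_eq_mul, ← hS]
    field_simp
    ring

lemma SSE_eq {n k : ℕ} (D : Fin n → Fin k × ℝ) :
    SSE D = ∑ j, (D j).2 ^ 2 - ∑ i, Fterm D i := by
  have h1 : ∑ i, ∑ j ∈ Finset.univ.filter (fun j => (D j).1 = i), (D j).2 ^ 2
      = ∑ j, (D j).2 ^ 2 :=
    Finset.sum_fiberwise Finset.univ (fun j => (D j).1) (fun j => (D j).2 ^ 2)
  rw [SSE, ← h1, ← Finset.sum_sub_distrib]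
  refine Finset.sum_congr rfl fun i _ => ?_
  simpa [groupMean, groupSize, Fterm] using
    group_sse (Finset.univ.filter (fun j => (D j).1 = i)) (fun j => (D j).2)

lemma key_add (M T y : ℝ) (hM : 0 ≤ M) (hy0 : 0 ≤ y) (hy1 : y ≤ 1) (hT0 : 0 ≤ T)
    (hTM : T ≤ M) : |(T + y) ^ 2 / (M + 1) - T ^ 2 / M| ≤ 3 := by
  rcases eq_or_lt_of_le hM with h | h
  · have hT : T = 0 := le_antisymm (by linarith) hT0
    subst hT
    rw [← h]
    norm_num
    nlinarith
  · have hd : 0 < M * (M + 1) := by nlinarith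
    have e : (T + y) ^ 2 / (M + 1) - T ^ 2 / M
        = (M * (T + y) ^ 2 - (M + 1) * T ^ 2) / (M * (M + 1)) := by
      field_simp
    rw [e, abs_div, abs_of_pos hd, div_le_iff₀ hd]
    rw [abs_le]
    constructor
    · nlinarith [mul_nonneg (sub_nonneg.mpr hTM) hy0, mul_nonneg h.le (sub_nonneg.mpr hy1),
        sq_nonneg T, mul_nonneg hT0 hy0]
    · nlinarith [mul_nonneg (sub_nonneg.mpr hTM) hy0, mul_nonneg h.le (sub_nonneg.mpr hy1),
        sq_nonneg T, mul_nonneg hT0 hy0, mul_nonneg (sub_nonneg.mpr hTM) (sub_nonneg.mpr hTM)]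

lemma key_same (M S S' : ℝ) (hM : 1 ≤ M) (hS0 : 0 ≤ S) (hSM : S ≤ M) (hS'0 : 0 ≤ S')
    (hS'M : S' ≤ M) (hd : |S - S'| ≤ 1) : |S ^ 2 / M - S' ^ 2 / M| ≤ 3 := by
  have hMp : (0:ℝ) < M := by linarith
  rw [div_sub_div_same, abs_div, abs_of_pos hMp, div_le_iff₀ hMp]
  rw [abs_le] at hd ⊢
  constructor <;> nlinarith [hd.1, hd.2]

lemma Fterm_eq {n k : ℕ} (D D' : Fin n → Fin k × ℝ) (r : Fin n)
    (hr : ∀ j, j ≠ r → D j = D' j) (i : Fin k) (h1 : (D r).1 ≠ i) (h2 : (D' r).1 ≠ i) :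
    Fterm D i = Fterm D' i := by
  have hs : Finset.univ.filter (fun j => (D j).1 = i)
      = Finset.univ.filter (fun j => (D' j).1 = i) := by
    ext j
    simp only [mem_filter, mem_univ, true_and]
    rcases eq_or_ne j r with rfl | hj
    · exact ⟨fun h => absurd h h1, fun h => absurd h h2⟩
    · rw [hr j hj]
  have hsum : ∑ j ∈ Finset.univ.filter (fun j => (D j).1 = i), (D j).2
      = ∑ j ∈ Finset.univ.filter (fun j => (D' j).1 = i), (D' j).2 := by
    rw [← hs]
    refine Finset.sum_congr rfl fun j hj => ?_
    have hjr : j ≠ r := by rintro rfl; exact h1 (Finset.mem_filter.mp hj).2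
    rw [hr j hjr]
  unfold Fterm groupSize
  rw [hsum, hs]

lemma Fterm_move {n k : ℕ} (D D' : Fin n → Fin k × ℝ) (r : Fin n)
    (hr : ∀ j, j ≠ r → D j = D' j)
    (hD : ∀ j, (D j).2 ∈ Set.Icc (0 : ℝ) 1) (hD' : ∀ j, (D' j).2 ∈ Set.Icc (0 : ℝ) 1)
    (i : Fin k) (h1 : (D r).1 = i) (h2 : (D' r).1 ≠ i) :
    |Fterm D i - Fterm D' i| ≤ 3 := by
  set s' := Finset.univ.filter (fun j => (D' j).1 = i) with hs'def
  have hrs' : r ∉ s' := by simp [hs'def, h2]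
  have hs : Finset.univ.filter (fun j => (D j).1 = i) = insert r s' := by
    ext j
    simp only [hs'def, mem_insert, mem_filter, mem_univ, true_and]
    rcases eq_or_ne j r with rfl | hj
    · simp [h1]
    · rw [hr j hj]; simp [hj]
  set T := ∑ j ∈ s', (D' j).2 with hTdef
  have hsum : ∑ j ∈ Finset.univ.filter (fun j => (D j).1 = i), (D j).2 = T + (D r).2 := by
    rw [hs, Finset.sum_insert hrs']
    have : ∑ j ∈ s', (D j).2 = T := by
      refine Finset.sum_congr rfl fun j hj => ?_
      rw [hr j (by rintro rfl; exact hrs' hj)]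
    rw [this]; ring
  have hcard : groupSize D i = s'.card + 1 := by
    unfold groupSize; rw [hs, Finset.card_insert_of_notMem hrs']
  have hgs' : groupSize D' i = s'.card := rfl
  have hT0 : 0 ≤ T := Finset.sum_nonneg fun j _ => (hD' j).1
  have hTM : T ≤ (s'.card : ℝ) := by
    calc T ≤ ∑ _j ∈ s', (1:ℝ) := Finset.sum_le_sum fun j _ => (hD' j).2
    _ = s'.card := by simp
  unfold Fterm
  rw [hsum, hcard, hgs']
  push_cast
  exact key_add (s'.card : ℝ) T (D r).2 (by positivity) (hD r).1 (hD r).2 hT0 hTM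

lemma Fterm_same {n k : ℕ} (D D' : Fin n → Fin k × ℝ) (r : Fin n)
    (hr : ∀ j, j ≠ r → D j = D' j)
    (hD : ∀ j, (D j).2 ∈ Set.Icc (0 : ℝ) 1) (hD' : ∀ j, (D' j).2 ∈ Set.Icc (0 : ℝ) 1)
    (i : Fin k) (h1 : (D r).1 = i) (h2 : (D' r).1 = i) :
    |Fterm D i - Fterm D' i| ≤ 3 := by
  set s := Finset.univ.filter (fun j => (D j).1 = i) with hsdef
  have hrs : r ∈ s := by simp [hsdef, h1]
  have hs : Finset.univ.filter (fun j => (D' j).1 = i) = s := by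
    ext j
    simp only [hsdef, mem_filter, mem_univ, true_and]
    rcases eq_or_ne j r with rfl | hj
    · simp [h1, h2]
    · rw [hr j hj]
  have hcard : groupSize D' i = groupSize D i := by unfold groupSize; rw [hs]
  have hc1 : (1:ℝ) ≤ (s.card : ℝ) := by
    exact_mod_cast Finset.card_pos.mpr ⟨r, hrs⟩
  set S := ∑ j ∈ s, (D j).2 with hSdef
  set S' := ∑ j ∈ s, (D' j).2 with hS'def
  have hdiff : S - S' = (D r).2 - (D' r).2 := by
    rw [hSdef, hS'def, ← Finset.add_sum_erase s (fun j => (D j).2) hrs,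
      ← Finset.add_sum_erase s (fun j => (D' j).2) hrs]
    have he : ∑ j ∈ s.erase r, (D j).2 = ∑ j ∈ s.erase r, (D' j).2 :=
      Finset.sum_congr rfl fun j hj => by rw [hr j (Finset.mem_erase.mp hj).1]
    rw [he]; ring
  have hdabs : |S - S'| ≤ 1 := by
    rw [hdiff, abs_le]
    constructor
    · nlinarith [(hD r).1, (hD' r).2]
    · nlinarith [(hD r).2, (hD' r).1]
  have hS0 : 0 ≤ S := Finset.sum_nonneg fun j _ => (hD j).1
  have hS'0 : 0 ≤ S' := Finset.sum_nonneg fun j _ => (hD' j).1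
  have hSM : S ≤ (s.card : ℝ) := by
    calc S ≤ ∑ _j ∈ s, (1:ℝ) := Finset.sum_le_sum fun j _ => (hD j).2
    _ = s.card := by simp
  have hS'M : S' ≤ (s.card : ℝ) := by
    calc S' ≤ ∑ _j ∈ s, (1:ℝ) := Finset.sum_le_sum fun j _ => (hD' j).2
    _ = s.card := by simp
  unfold Fterm groupSize
  rw [hs]
  exact key_same (s.card : ℝ) S S' hc1 hS0 hSM hS'0 hS'M hdabs

theorem SSE_sensitivity {n k : ℕ} (D D' : Fin n → Fin k × ℝ)
    (hD : ∀ j, (D j).2 ∈ Set.Icc (0 : ℝ) 1) (hD' : ∀ j, (D' j).2 ∈ Set.Icc (0 : ℝ) 1)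
    (hneighbor : Neighboring D D') :
    |SSE D - SSE D'| ≤ 7 := by
  obtain ⟨r, hr⟩ := hneighbor
  have hr' : ∀ j, j ≠ r → D' j = D j := fun j h => (hr j h).symm
  set a := (D r).1 with ha
  set b := (D' r).1 with hb
  have h2sum : ∑ j, (D j).2 ^ 2 - ∑ j, (D' j).2 ^ 2 = (D r).2 ^ 2 - (D' r).2 ^ 2 := by
    rw [← Finset.add_sum_erase Finset.univ (fun j => (D j).2 ^ 2) (Finset.mem_univ r),
      ← Finset.add_sum_erase Finset.univ (fun j => (D' j).2 ^ 2) (Finset.mem_univ r)]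
    have he : ∑ j ∈ Finset.univ.erase r, (D j).2 ^ 2
        = ∑ j ∈ Finset.univ.erase r, (D' j).2 ^ 2 :=
      Finset.sum_congr rfl fun j hj => by rw [hr j (Finset.mem_erase.mp hj).1]
    rw [he]; ring
  have hFsum : ∑ i, Fterm D i - ∑ i, Fterm D' i
      = ∑ i ∈ ({a, b} : Finset (Fin k)), (Fterm D i - Fterm D' i) := by
    rw [← Finset.sum_sub_distrib]
    refine (Finset.sum_subset (Finset.subset_univ _) ?_).symm
    intro i _ hi
    simp only [Finset.mem_insert, Finset.mem_singleton, not_or] at hi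
    rw [Fterm_eq D D' r hr i (fun h => hi.1 h.symm) (fun h => hi.2 h.symm), sub_self]
  have hper : ∀ i ∈ ({a, b} : Finset (Fin k)), |Fterm D i - Fterm D' i| ≤ 3 := by
    intro i hi
    by_cases hai : (D r).1 = i <;> by_cases hbi : (D' r).1 = i
    · exact Fterm_same D D' r hr hD hD' i hai hbi
    · exact Fterm_move D D' r hr hD hD' i hai hbi
    · rw [abs_sub_comm]
      exact Fterm_move D' D r hr' hD' hD i hbi hai
    · simp only [Finset.mem_insert, Finset.mem_singleton] at hi
      rcases hi with rfl | rfl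
      · exact absurd ha.symm hai
      · exact absurd hb.symm hbi
  have hFbound : |∑ i ∈ ({a, b} : Finset (Fin k)), (Fterm D i - Fterm D' i)| ≤ 6 := by
    calc |∑ i ∈ ({a, b} : Finset (Fin k)), (Fterm D i - Fterm D' i)|
        ≤ ∑ i ∈ ({a, b} : Finset (Fin k)), |Fterm D i - Fterm D' i| :=
          Finset.abs_sum_le_sum_abs _ _
      _ ≤ ({a, b} : Finset (Fin k)).card • (3:ℝ) :=
          Finset.sum_le_card_nsmul _ _ 3 hper
      _ ≤ 2 • (3:ℝ) := by
          have : ({a, b} : Finset (Fin k)).card ≤ 2 := by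
            apply le_trans (Finset.card_insert_le _ _)
            simp
          exact nsmul_le_nsmul_left (by norm_num) this
      _ = 6 := by norm_num
  have hsq : |(D r).2 ^ 2 - (D' r).2 ^ 2| ≤ 1 := by
    rw [abs_le]
    constructor
    · nlinarith [(hD r).1, (hD r).2, (hD' r).1, (hD' r).2]
    · nlinarith [(hD r).1, (hD r).2, (hD' r).1, (hD' r).2]
  have key : SSE D - SSE D' = ((D r).2 ^ 2 - (D' r).2 ^ 2)
      - ∑ i ∈ ({a, b} : Finset (Fin k)), (Fterm D i - Fterm D' i) := by
    rw [SSE_eq D, SSE_eq D', ← hFsum, ← h2sum]; ring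
  calc |SSE D - SSE D'|
      ≤ |(D r).2 ^ 2 - (D' r).2 ^ 2|
        + |∑ i ∈ ({a, b} : Finset (Fin k)), (Fterm D i - Fterm D' i)| := by
        rw [key]; exact abs_sub _ _
    _ ≤ 1 + 6 := add_le_add hsq hFbound
    _ = 7 := by norm_num
end

section
/- With the same database setup, define SSA(D) = ∑_{i=1}^k n_i (ȳ_i - ȳ)^2 where ȳ is the grand mean of all n values. Then for any two neighboring databases D and D' on n rows, |SSA(D) - SSA(D')| ≤ 9 + 5/n. -/
open Finset

-- per-group real-arithmetic helpers
lemma habs_same (m S S' : ℝ) (hm : 0 < m) (h0 : 0 ≤ S) (hS : S ≤ m)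
    (h0' : 0 ≤ S') (hS' : S' ≤ m) (hd : |S' - S| ≤ 1) :
    |S ^ 2 / m - S' ^ 2 / m| ≤ 2 := by
  rw [div_sub_div_same, abs_div, abs_of_pos hm, div_le_iff₀ hm]
  rw [abs_le] at hd ⊢
  constructor <;> nlinarith [hd.1, hd.2]

lemma hrem (m S x : ℝ) (hm : 1 ≤ m) (hx0 : 0 ≤ x) (hx1 : x ≤ 1)
    (hxS : x ≤ S) (hSx : S - x ≤ m - 1) :
    |S ^ 2 / m - (S - x) ^ 2 / (m - 1)| ≤ 2 := by
  rcases eq_or_lt_of_le hm with h1 | h1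
  · have hSx' : S = x := by nlinarith
    rw [← h1]
    simp [hSx']
    nlinarith
  · have hm0 : (0:ℝ) < m := by linarith
    have hm1 : (0:ℝ) < m - 1 := by linarith
    have key : S ^ 2 / m - (S - x) ^ 2 / (m - 1) = x ^ 2 - (S - m * x) ^ 2 / (m * (m - 1)) := by
      field_simp
      ring
    rw [key]
    have ht0 : 0 ≤ (S - m*x)^2 / (m*(m-1)) := div_nonneg (sq_nonneg _) (by positivity)
    have ht1 : (S - m*x)^2 / (m*(m-1)) ≤ 1 := by
      rw [div_le_one (by positivity)]
      nlinarith [mul_nonneg (show (0:ℝ) ≤ m-1-S+m*x by nlinarith) (show (0:ℝ) ≤ m-1+S-m*x by nlinarith)]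
    rw [abs_le]; constructor <;> nlinarith

lemma hadd (m S x : ℝ) (hm : m = 0 ∨ 1 ≤ m) (hS0 : 0 ≤ S) (hS : S ≤ m)
    (hx0 : 0 ≤ x) (hx1 : x ≤ 1) :
    |(S + x) ^ 2 / (m + 1) - S ^ 2 / m| ≤ 2 := by
  rcases hm with h0 | h1
  · subst h0
    have : S = 0 := le_antisymm hS hS0
    subst this
    simp
    nlinarith
  · have hm0 : (0:ℝ) < m := by linarith
    have key : (S + x) ^ 2 / (m + 1) - S ^ 2 / m = x ^ 2 - (S - m * x) ^ 2 / (m * (m + 1)) := by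
      field_simp
      ring
    rw [key]
    have ht0 : 0 ≤ (S - m*x)^2 / (m*(m+1)) := div_nonneg (sq_nonneg _) (by positivity)
    have ht1 : (S - m*x)^2 / (m*(m+1)) ≤ 1 := by
      rw [div_le_one (by positivity)]
      nlinarith [mul_nonneg (show (0:ℝ) ≤ m - S + m * x by nlinarith) (show (0:ℝ) ≤ m + S - m * x by nlinarith)]
    rw [abs_le]; constructor <;> nlinarith

noncomputable def gSum {n k : ℕ} (D : Fin n → Fin k × ℝ) (i : Fin k) : ℝ :=
  ∑ j ∈ Finset.univ.filter (fun j => (D j).1 = i), (D j).2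

lemma gSum_nonneg {n k : ℕ} (D : Fin n → Fin k × ℝ)
    (hD : ∀ j, (D j).2 ∈ Set.Icc (0:ℝ) 1) (i : Fin k) : 0 ≤ gSum D i :=
  Finset.sum_nonneg (fun j _ => (hD j).1)

lemma gSum_le {n k : ℕ} (D : Fin n → Fin k × ℝ)
    (hD : ∀ j, (D j).2 ∈ Set.Icc (0:ℝ) 1) (i : Fin k) :
    gSum D i ≤ (groupSize D i : ℝ) := by
  have := Finset.sum_le_card_nsmul (Finset.univ.filter (fun j => (D j).1 = i))
    (fun j => (D j).2) 1 (fun j _ => (hD j).2)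
  simpa [groupSize, gSum] using this

lemma sum_gSum {n k : ℕ} (D : Fin n → Fin k × ℝ) :
    ∑ i, gSum D i = ∑ j, (D j).2 :=
  Finset.sum_fiberwise Finset.univ (fun j => (D j).1) (fun j => (D j).2)

lemma sum_groupSize {n k : ℕ} (D : Fin n → Fin k × ℝ) :
    ∑ i, (groupSize D i : ℝ) = n := by
  have := Finset.sum_fiberwise Finset.univ (fun j => (D j).1) (fun _ => (1:ℝ))
  simpa [groupSize] using this

lemma SSA_eq {n k : ℕ} (D : Fin n → Fin k × ℝ) (hn : 0 < n) :
    SSA D = (∑ i, (gSum D i) ^ 2 / (groupSize D i : ℝ)) - (∑ j, (D j).2) ^ 2 / n := by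
  have hterm : ∀ i, (groupSize D i : ℝ) * (groupMean D i - grandMean D) ^ 2 =
      (gSum D i) ^ 2 / (groupSize D i : ℝ) - 2 * grandMean D * gSum D i
        + (groupSize D i : ℝ) * grandMean D ^ 2 := by
    intro i
    by_cases h : groupSize D i = 0
    · have hs : gSum D i = 0 := by
        have : (Finset.univ.filter (fun j => (D j).1 = i)) = ∅ := Finset.card_eq_zero.mp h
        simp [gSum, this]
      simp [h, hs]
    · have h0 : (groupSize D i : ℝ) ≠ 0 := Nat.cast_ne_zero.mpr h
      rw [groupMean]
      rw [show (∑ j ∈ Finset.univ.filter (fun j => (D j).1 = i), (D j).2) = gSum D i from rfl]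
      field_simp
      ring
  rw [SSA]
  rw [Finset.sum_congr rfl (fun i _ => hterm i)]
  rw [Finset.sum_add_distrib, Finset.sum_sub_distrib, ← Finset.mul_sum, ← Finset.sum_mul,
    sum_gSum, sum_groupSize]
  have hn0 : (n : ℝ) ≠ 0 := Nat.cast_ne_zero.mpr hn.ne'
  rw [grandMean]
  field_simp
  ring

theorem SSA_sensitivity {n k : ℕ} (D D' : Fin n → Fin k × ℝ)
    (hD : ∀ j, (D j).2 ∈ Set.Icc (0 : ℝ) 1) (hD' : ∀ j, (D' j).2 ∈ Set.Icc (0 : ℝ) 1)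
    (hneighbor : Neighboring D D') :
    |SSA D - SSA D'| ≤ 9 + 5 / n := by
  obtain ⟨r, hr⟩ := hneighbor
  have hn : 0 < n := r.pos
  have hn0 : (n:ℝ) ≠ 0 := Nat.cast_ne_zero.mpr hn.ne'
  have hnpos : (0:ℝ) < n := by positivity
  have h5 : (0:ℝ) ≤ 5 / n := by positivity
  -- grand sums
  have hgrand : ∑ j, (D' j).2 = ∑ j, (D j).2 - (D r).2 + (D' r).2 := by
    have h1 := Finset.sum_erase_add Finset.univ (fun j => (D j).2) (Finset.mem_univ r)
    have h2 := Finset.sum_erase_add Finset.univ (fun j => (D' j).2) (Finset.mem_univ r)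
    have h3 : ∑ j ∈ Finset.univ.erase r, (D' j).2 = ∑ j ∈ Finset.univ.erase r, (D j).2 :=
      Finset.sum_congr rfl (fun j hj => by rw [← hr j (Finset.ne_of_mem_erase hj)])
    rw [h3] at h2
    linarith
  have hS0 : 0 ≤ ∑ j, (D j).2 := Finset.sum_nonneg fun j _ => (hD j).1
  have hSn : ∑ j, (D j).2 ≤ (n:ℝ) := by
    have := Finset.sum_le_card_nsmul Finset.univ (fun j => (D j).2) 1 (fun j _ => (hD j).2)
    simpa using this
  have hS0' : 0 ≤ ∑ j, (D' j).2 := Finset.sum_nonneg fun j _ => (hD' j).1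
  have hSn' : ∑ j, (D' j).2 ≤ (n:ℝ) := by
    have := Finset.sum_le_card_nsmul Finset.univ (fun j => (D' j).2) 1 (fun j _ => (hD' j).2)
    simpa using this
  have hgr : |(∑ j, (D j).2) ^ 2 / n - (∑ j, (D' j).2) ^ 2 / n| ≤ 2 := by
    refine habs_same (n:ℝ) _ _ hnpos hS0 hSn hS0' hSn' ?_
    rw [hgrand]
    have := (hD r).1; have := (hD r).2; have := (hD' r).1; have := (hD' r).2
    rw [abs_le]; constructor <;> [skip; skip] <;> linarith
  have hmem_a : r ∈ Finset.univ.filter (fun j => (D j).1 = (D r).1) := by simp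
  have hcard_a : 1 ≤ groupSize D (D r).1 := Finset.card_pos.mpr ⟨r, hmem_a⟩
  have hcard_a' : (1:ℝ) ≤ (groupSize D (D r).1 : ℝ) := by exact_mod_cast hcard_a
  have hxS : (D r).2 ≤ gSum D (D r).1 :=
    Finset.single_le_sum (f := fun j => (D j).2) (fun j _ => (hD j).1) hmem_a
  by_cases hab : (D r).1 = (D' r).1
  · -- same group: only group a changes its sum
    have hPsame : ∀ i : Fin k, Finset.univ.filter (fun j => (D' j).1 = i)
        = Finset.univ.filter (fun j => (D j).1 = i) := by
      intro i
      ext j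
      simp only [Finset.mem_filter, Finset.mem_univ, true_and]
      by_cases hj : j = r
      · subst hj; rw [← hab]
      · rw [← hr j hj]
    have hsize : ∀ i, groupSize D' i = groupSize D i := fun i => by
      rw [groupSize, groupSize, hPsame i]
    have hgs : ∀ i, i ≠ (D r).1 → gSum D' i = gSum D i := by
      intro i hi
      rw [gSum, gSum, hPsame i]
      refine Finset.sum_congr rfl (fun j hj => ?_)
      have hjr : j ≠ r := by
        rintro rfl
        exact hi ((Finset.mem_filter.mp hj).2 ▸ rfl)
      rw [← hr j hjr]
    have hgsa : gSum D' (D r).1 = gSum D (D r).1 - (D r).2 + (D' r).2 := by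
      have hmem_a2 : r ∈ Finset.univ.filter (fun j => (D' j).1 = (D r).1) := by
        rw [hPsame]; exact hmem_a
      have e1 := Finset.sum_erase_add _ (fun j => (D j).2) hmem_a
      have e2 := Finset.sum_erase_add _ (fun j => (D' j).2) hmem_a2
      have e3 : ∑ j ∈ (Finset.univ.filter (fun j => (D' j).1 = (D r).1)).erase r, (D' j).2
          = ∑ j ∈ (Finset.univ.filter (fun j => (D j).1 = (D r).1)).erase r, (D j).2 := by
        rw [hPsame]
        exact Finset.sum_congr rfl (fun j hj => by rw [← hr j (Finset.ne_of_mem_erase hj)])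
      rw [e3] at e2
      rw [gSum, gSum]
      linarith
    have boundA : |gSum D (D r).1 ^ 2 / (groupSize D (D r).1 : ℝ)
        - gSum D' (D r).1 ^ 2 / (groupSize D' (D r).1 : ℝ)| ≤ 2 := by
      rw [hsize]
      refine habs_same _ _ _ (by linarith) (gSum_nonneg D hD _) (gSum_le D hD _)
        (gSum_nonneg D' hD' _) (by rw [← hsize]; exact gSum_le D' hD' _) ?_
      rw [hgsa]
      have := (hD r).1; have := (hD r).2; have := (hD' r).1; have := (hD' r).2
      rw [abs_le]; constructor <;> [skip; skip] <;> linarith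
    have hsum : (∑ i, gSum D i ^ 2 / (groupSize D i : ℝ))
        - (∑ i, gSum D' i ^ 2 / (groupSize D' i : ℝ))
        = gSum D (D r).1 ^ 2 / (groupSize D (D r).1 : ℝ)
          - gSum D' (D r).1 ^ 2 / (groupSize D' (D r).1 : ℝ) := by
      rw [← Finset.sum_sub_distrib]
      rw [Finset.sum_eq_single (D r).1]
      · intro i _ hia
        rw [hgs i hia, hsize i]; ring
      · intro h; exact absurd (Finset.mem_univ _) h
    rw [SSA_eq D hn, SSA_eq D' hn]
    calc |(∑ i, gSum D i ^ 2 / (groupSize D i : ℝ)) - (∑ j, (D j).2) ^ 2 / n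
          - ((∑ i, gSum D' i ^ 2 / (groupSize D' i : ℝ)) - (∑ j, (D' j).2) ^ 2 / n)|
        = |(gSum D (D r).1 ^ 2 / (groupSize D (D r).1 : ℝ)
            - gSum D' (D r).1 ^ 2 / (groupSize D' (D r).1 : ℝ))
          + ((∑ j, (D' j).2) ^ 2 / n - (∑ j, (D j).2) ^ 2 / n)| := by
          rw [show (∑ i, gSum D i ^ 2 / (groupSize D i : ℝ)) - (∑ j, (D j).2) ^ 2 / n
            - ((∑ i, gSum D' i ^ 2 / (groupSize D' i : ℝ)) - (∑ j, (D' j).2) ^ 2 / n)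
            = (gSum D (D r).1 ^ 2 / (groupSize D (D r).1 : ℝ)
            - gSum D' (D r).1 ^ 2 / (groupSize D' (D r).1 : ℝ))
          + ((∑ j, (D' j).2) ^ 2 / n - (∑ j, (D j).2) ^ 2 / n) from by linarith]
      _ ≤ |gSum D (D r).1 ^ 2 / (groupSize D (D r).1 : ℝ)
            - gSum D' (D r).1 ^ 2 / (groupSize D' (D r).1 : ℝ)|
          + |(∑ j, (D' j).2) ^ 2 / n - (∑ j, (D j).2) ^ 2 / n| := abs_add_le _ _
      _ ≤ 2 + 2 := by
          refine add_le_add boundA ?_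
          rw [abs_sub_comm]; exact hgr
      _ ≤ 9 + 5 / n := by linarith
  · -- different groups
    have hnmem_b : r ∉ Finset.univ.filter (fun j => (D j).1 = (D' r).1) := by
      simp only [Finset.mem_filter, Finset.mem_univ, true_and]
      exact hab
    have hPa' : Finset.univ.filter (fun j => (D' j).1 = (D r).1)
        = (Finset.univ.filter (fun j => (D j).1 = (D r).1)).erase r := by
      ext j
      simp only [Finset.mem_filter, Finset.mem_univ, true_and, Finset.mem_erase]
      by_cases hj : j = r
      · subst hj
        constructor
        · intro h; exact absurd h.symm hab
        · rintro ⟨h, -⟩; exact absurd rfl h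
      · rw [← hr j hj]
        exact ⟨fun h => ⟨hj, h⟩, fun h => h.2⟩
    have hPb' : Finset.univ.filter (fun j => (D' j).1 = (D' r).1)
        = insert r (Finset.univ.filter (fun j => (D j).1 = (D' r).1)) := by
      ext j
      simp only [Finset.mem_filter, Finset.mem_univ, true_and, Finset.mem_insert]
      by_cases hj : j = r
      · subst hj; simp
      · rw [← hr j hj]
        exact ⟨fun h => Or.inr h, fun h => h.resolve_left hj⟩
    have hsize_a' : (groupSize D' (D r).1 : ℝ) = (groupSize D (D r).1 : ℝ) - 1 := by
      rw [groupSize, groupSize, hPa', Finset.card_erase_of_mem hmem_a]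
      have h1 : 1 ≤ #(Finset.univ.filter (fun j => (D j).1 = (D r).1)) := hcard_a
      rw [Nat.cast_sub h1, Nat.cast_one]
    have hsize_b' : (groupSize D' (D' r).1 : ℝ) = (groupSize D (D' r).1 : ℝ) + 1 := by
      rw [groupSize, groupSize, hPb', Finset.card_insert_of_notMem hnmem_b]
      push_cast; ring
    have hgs_a' : gSum D' (D r).1 = gSum D (D r).1 - (D r).2 := by
      rw [gSum, hPa']
      have e3 : ∑ j ∈ (Finset.univ.filter (fun j => (D j).1 = (D r).1)).erase r, (D' j).2
          = ∑ j ∈ (Finset.univ.filter (fun j => (D j).1 = (D r).1)).erase r, (D j).2 :=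
        Finset.sum_congr rfl (fun j hj => by rw [← hr j (Finset.ne_of_mem_erase hj)])
      have e1 := Finset.sum_erase_add _ (fun j => (D j).2) hmem_a
      rw [e3, gSum]
      linarith
    have hgs_b' : gSum D' (D' r).1 = gSum D (D' r).1 + (D' r).2 := by
      rw [gSum, hPb', Finset.sum_insert hnmem_b]
      have e3 : ∑ j ∈ Finset.univ.filter (fun j => (D j).1 = (D' r).1), (D' j).2
          = ∑ j ∈ Finset.univ.filter (fun j => (D j).1 = (D' r).1), (D j).2 := by
        refine Finset.sum_congr rfl (fun j hj => ?_)
        have hjr : j ≠ r := fun h => hnmem_b (h ▸ hj)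
        rw [← hr j hjr]
      rw [e3, gSum]
      ring
    have hother : ∀ i : Fin k, i ≠ (D r).1 → i ≠ (D' r).1 →
        gSum D' i = gSum D i ∧ groupSize D' i = groupSize D i := by
      intro i hia hib
      have hP : Finset.univ.filter (fun j => (D' j).1 = i)
          = Finset.univ.filter (fun j => (D j).1 = i) := by
        ext j
        simp only [Finset.mem_filter, Finset.mem_univ, true_and]
        by_cases hj : j = r
        · subst hj
          constructor
          · intro h; exact absurd h.symm hib
          · intro h; exact absurd h.symm hia
        · rw [← hr j hj]
      constructor
      · rw [gSum, gSum, hP]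
        refine Finset.sum_congr rfl (fun j hj => ?_)
        have hjr : j ≠ r := by
          rintro rfl
          exact hia ((Finset.mem_filter.mp hj).2 ▸ rfl)
        rw [← hr j hjr]
      · rw [groupSize, groupSize, hP]
    have boundA : |gSum D (D r).1 ^ 2 / (groupSize D (D r).1 : ℝ)
        - gSum D' (D r).1 ^ 2 / (groupSize D' (D r).1 : ℝ)| ≤ 2 := by
      rw [hsize_a', hgs_a']
      refine hrem _ _ _ hcard_a' (hD r).1 (hD r).2 hxS ?_
      rw [← hgs_a', ← hsize_a']
      exact gSum_le D' hD' _
    have boundB : |gSum D (D' r).1 ^ 2 / (groupSize D (D' r).1 : ℝ)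
        - gSum D' (D' r).1 ^ 2 / (groupSize D' (D' r).1 : ℝ)| ≤ 2 := by
      rw [hsize_b', hgs_b', abs_sub_comm]
      have hm01 : (groupSize D (D' r).1 : ℝ) = 0 ∨ 1 ≤ (groupSize D (D' r).1 : ℝ) := by
        rcases Nat.eq_zero_or_pos (groupSize D (D' r).1) with h | h
        · left; exact_mod_cast h
        · right; exact_mod_cast h
      exact hadd _ _ _ hm01 (gSum_nonneg D hD _) (gSum_le D hD _) (hD' r).1 (hD' r).2
    have hsum : (∑ i, gSum D i ^ 2 / (groupSize D i : ℝ))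
        - (∑ i, gSum D' i ^ 2 / (groupSize D' i : ℝ))
        = (gSum D (D r).1 ^ 2 / (groupSize D (D r).1 : ℝ)
            - gSum D' (D r).1 ^ 2 / (groupSize D' (D r).1 : ℝ))
          + (gSum D (D' r).1 ^ 2 / (groupSize D (D' r).1 : ℝ)
            - gSum D' (D' r).1 ^ 2 / (groupSize D' (D' r).1 : ℝ)) := by
      rw [← Finset.sum_sub_distrib]
      rw [← Finset.sum_subset (Finset.subset_univ ({(D r).1, (D' r).1} : Finset (Fin k)))
        (fun i _ hi => ?_)]
      · rw [Finset.sum_pair hab]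
      · simp only [Finset.mem_insert, Finset.mem_singleton, not_or] at hi
        obtain ⟨h1, h2⟩ := hother i hi.1 hi.2
        rw [h1, h2]; ring
    rw [SSA_eq D hn, SSA_eq D' hn]
    calc |(∑ i, gSum D i ^ 2 / (groupSize D i : ℝ)) - (∑ j, (D j).2) ^ 2 / n
          - ((∑ i, gSum D' i ^ 2 / (groupSize D' i : ℝ)) - (∑ j, (D' j).2) ^ 2 / n)|
        = |((∑ i, gSum D i ^ 2 / (groupSize D i : ℝ))
            - (∑ i, gSum D' i ^ 2 / (groupSize D' i : ℝ)))
          + ((∑ j, (D' j).2) ^ 2 / n - (∑ j, (D j).2) ^ 2 / n)| := by congr 1; ring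
      _ ≤ |(∑ i, gSum D i ^ 2 / (groupSize D i : ℝ))
            - (∑ i, gSum D' i ^ 2 / (groupSize D' i : ℝ))|
          + |(∑ j, (D' j).2) ^ 2 / n - (∑ j, (D j).2) ^ 2 / n| := abs_add_le _ _
      _ ≤ (2 + 2) + 2 := by
          refine add_le_add ?_ (by rw [abs_sub_comm]; exact hgr)
          rw [hsum]
          exact (abs_add_le _ _).trans (add_le_add boundA boundB)
      _ ≤ 9 + 5 / n := by linarith
end

section
/- With the same setup, if the changed row stays within the same group (only its value in [0,1] changes), then |SSE(D) - SSE(D')| ≤ 4. -/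
open Finset

lemma sse_group_eq {α : Type*} (s : Finset α) (y : α → ℝ) (hc : 0 < s.card) :
    ∑ j ∈ s, (y j - (∑ j ∈ s, y j) / s.card) ^ 2
      = ∑ j ∈ s, (y j) ^ 2 - (∑ j ∈ s, y j) ^ 2 / s.card := by
  have hc' : (s.card : ℝ) ≠ 0 := by positivity
  have : ∑ j ∈ s, (y j - (∑ j ∈ s, y j) / s.card) ^ 2
      = ∑ j ∈ s, ((y j)^2 - 2 * ((∑ j ∈ s, y j) / s.card) * y j + ((∑ j ∈ s, y j) / s.card)^2) := by
    apply Finset.sum_congr rfl; intro j _; ring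
  rw [this, Finset.sum_add_distrib, Finset.sum_sub_distrib, Finset.sum_const, ← Finset.mul_sum]
  field_simp
  have hc2 : (s.card:ℝ)^2 * (s.card:ℝ)⁻¹^2 = 1 := by rw [← mul_pow, mul_inv_cancel₀ hc', one_pow]
  linear_combination (∑ j ∈ s, y j)^2 * hc2

theorem SSE_sensitivity_same_group {n k : ℕ} (D D' : Fin n → Fin k × ℝ)
    (hD : ∀ j, (D j).2 ∈ Set.Icc (0 : ℝ) 1) (hD' : ∀ j, (D' j).2 ∈ Set.Icc (0 : ℝ) 1)
    (hneighbor : ∃ r, (D r).1 = (D' r).1 ∧ ∀ j, j ≠ r → D j = D' j) :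
    |SSE D - SSE D'| ≤ 4 := by
  obtain ⟨r, hg, hoff⟩ := hneighbor
  have hfst : ∀ j, (D j).1 = (D' j).1 := by
    intro j
    by_cases h : j = r
    · subst h; exact hg
    · rw [hoff j h]
  have hsets : ∀ i : Fin k,
      (univ.filter (fun j => (D j).1 = i)) = (univ.filter (fun j => (D' j).1 = i)) := by
    intro i; apply Finset.filter_congr; intro j _; simp [hfst j]
  set g := (D r).1 with hgdef
  have hsize : ∀ i, groupSize D i = groupSize D' i := by
    intro i; unfold groupSize; rw [hsets i]
  have hmean : ∀ i, i ≠ g → groupMean D i = groupMean D' i := by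
    intro i hi
    unfold groupMean
    rw [hsets i, hsize i]
    congr 1
    apply Finset.sum_congr rfl
    intro j hj
    have : j ≠ r := by
      rintro rfl
      simp only [Finset.mem_filter] at hj
      rw [← hfst j] at hj
      exact hi hj.2.symm
    rw [hoff j this]
  -- group term difference only in g
  have key : SSE D - SSE D' =
      (∑ j ∈ univ.filter (fun j => (D j).1 = g), ((D j).2 - groupMean D g) ^ 2)
      - (∑ j ∈ univ.filter (fun j => (D j).1 = g), ((D' j).2 - groupMean D' g) ^ 2) := by
    unfold SSE
    rw [← Finset.sum_sub_distrib]
    rw [Finset.sum_eq_single g]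
    · rw [hsets g]
    · intro i _ hi
      rw [hsets i, hmean i hi, sub_eq_zero]
      apply Finset.sum_congr rfl
      intro j hj
      have hjr : j ≠ r := by
        rintro rfl
        simp only [Finset.mem_filter] at hj
        rw [← hfst j] at hj
        exact hi hj.2.symm
      rw [hoff j hjr]
    · intro h; exact absurd (Finset.mem_univ g) h
  set s : Finset (Fin n) := univ.filter (fun j => (D j).1 = g) with hs
  have hrs : r ∈ s := by simp [hs, hgdef]
  have hc0 : 0 < s.card := Finset.card_pos.2 ⟨r, hrs⟩
  have hc : (0:ℝ) < s.card := by exact_mod_cast hc0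
  have hmD : groupMean D g = (∑ j ∈ s, (D j).2) / s.card := by
    unfold groupMean groupSize; rfl
  have hmD' : groupMean D' g = (∑ j ∈ s, (D' j).2) / s.card := by
    unfold groupMean groupSize; rw [← hsets g]
  rw [hmD, hmD', sse_group_eq s (fun j => (D j).2) hc0,
    sse_group_eq s (fun j => (D' j).2) hc0] at key
  set A := (D r).2
  set B := (D' r).2
  set S := ∑ j ∈ s, (D j).2 with hS
  set S' := ∑ j ∈ s, (D' j).2 with hS'
  have hsq : ∑ j ∈ s, (D j).2 ^ 2 - ∑ j ∈ s, (D' j).2 ^ 2 = A ^ 2 - B ^ 2 := by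
    rw [← Finset.sum_sub_distrib, Finset.sum_eq_single_of_mem r hrs]
    intro j _ hj; rw [hoff j hj, sub_self]
  have hSS : S - S' = A - B := by
    rw [hS, hS', ← Finset.sum_sub_distrib, Finset.sum_eq_single_of_mem r hrs]
    intro j _ hj; rw [hoff j hj, sub_self]
  have hkey2 : SSE D - SSE D' = (A ^ 2 - B ^ 2) - (S ^ 2 - S' ^ 2) / s.card := by
    rw [key]; rw [← hsq]; ring
  have hA := hD r; have hB := hD' r
  simp only [Set.mem_Icc] at hA hB
  have hS0 : 0 ≤ S := Finset.sum_nonneg fun j _ => (hD j).1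
  have hS1 : S ≤ s.card := by
    calc S ≤ ∑ _j ∈ s, (1:ℝ) := Finset.sum_le_sum fun j _ => (hD j).2
    _ = s.card := by simp
  have hS'0 : 0 ≤ S' := Finset.sum_nonneg fun j _ => (hD' j).1
  have hS'1 : S' ≤ s.card := by
    calc S' ≤ ∑ _j ∈ s, (1:ℝ) := Finset.sum_le_sum fun j _ => (hD' j).2
    _ = s.card := by simp
  have h1 : |A ^ 2 - B ^ 2| ≤ 2 :=
    abs_le.2 ⟨by nlinarith [hA.1, hA.2, hB.1, hB.2], by nlinarith [hA.1, hA.2, hB.1, hB.2]⟩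
  have h2 : |(S ^ 2 - S' ^ 2) / s.card| ≤ 2 := by
    rw [abs_div, abs_of_pos hc, div_le_iff₀ hc]
    have : S ^ 2 - S' ^ 2 = (S + S') * (S - S') := by ring
    rw [this, abs_mul, hSS]
    have hab : |A - B| ≤ 1 := abs_le.2 ⟨by linarith [hA.1, hB.2], by linarith [hA.2, hB.1]⟩
    have hsum : |S + S'| ≤ 2 * s.card := by
      rw [abs_of_nonneg (by linarith)]; linarith
    calc |S + S'| * |A - B| ≤ (2 * s.card) * 1 :=
          mul_le_mul hsum hab (abs_nonneg _) (by positivity)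
      _ = 2 * s.card := by ring
  calc |SSE D - SSE D'| = |(A ^ 2 - B ^ 2) - (S ^ 2 - S' ^ 2) / s.card| := by rw [hkey2]
    _ ≤ |A ^ 2 - B ^ 2| + |(S ^ 2 - S' ^ 2) / s.card| := abs_sub _ _
    _ ≤ 2 + 2 := add_le_add h1 h2
    _ = 4 := by norm_num
end

section
/- Let f : X → ℝ be a function on databases with sensitivity at most s > 0, i.e., |f(D) - f(D')| ≤ s for all neighboring D, D'. Let M(D) = f(D) + L where L ~ Lap(s/ε). Then for every measurable S ⊆ ℝ and neighboring D, D', Pr[M(D) ∈ S] ≤ e^ε · Pr[M(D') ∈ S]. -/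
open MeasureTheory

/-- The Laplace distribution with scale `b`, as a measure on `ℝ`. -/
noncomputable def laplaceMeasure (b : ℝ) : Measure ℝ :=
  volume.withDensity (fun x => ENNReal.ofReal (Real.exp (-|x| / b) / (2 * b)))

lemma laplaceMeasure_map_apply (b a : ℝ) {S : Set ℝ} (hS : MeasurableSet S) :
    ((laplaceMeasure b).map (fun x => a + x)) S
      = ∫⁻ x in S, ENNReal.ofReal (Real.exp (-|x - a| / b) / (2 * b)) := by
  rw [Measure.map_apply (measurable_const_add a) hS, laplaceMeasure,
    withDensity_apply _ ((measurable_const_add a) hS)]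
  have : ∀ x : ℝ, ((fun x => a + x) ⁻¹' S).indicator
      (fun x => ENNReal.ofReal (Real.exp (-|x| / b) / (2 * b))) x
      = S.indicator (fun y => ENNReal.ofReal (Real.exp (-|y - a| / b) / (2 * b))) (a + x) := by
    intro x
    by_cases h : a + x ∈ S <;> simp [Set.indicator, h, Set.mem_preimage]
  calc ∫⁻ x in (fun x => a + x) ⁻¹' S, ENNReal.ofReal (Real.exp (-|x| / b) / (2 * b))
      = ∫⁻ x, S.indicator (fun y => ENNReal.ofReal (Real.exp (-|y - a| / b) / (2 * b))) (a + x) := by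
        rw [← lintegral_indicator ((measurable_const_add a) hS) _]
        exact lintegral_congr this
    _ = ∫⁻ x, S.indicator (fun y => ENNReal.ofReal (Real.exp (-|y - a| / b) / (2 * b))) x :=
        lintegral_add_left_eq_self _ a
    _ = _ := lintegral_indicator hS _

theorem laplace_mechanism {X : Type*} (Neighboring : X → X → Prop)
    (f : X → ℝ) (s ε : ℝ) (hs : 0 < s) (hε : 0 < ε)
    (hsens : ∀ D D', Neighboring D D' → |f D - f D'| ≤ s)
    (M : X → Measure ℝ)
    (hM : ∀ D, M D = (laplaceMeasure (s / ε)).map (fun x => f D + x)) :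
    ∀ D D', Neighboring D D' → ∀ S : Set ℝ, MeasurableSet S →
      M D S ≤ ENNReal.ofReal (Real.exp ε) * M D' S := by
  intro D D' hN S hS
  have hb : 0 < s / ε := div_pos hs hε
  rw [hM D, hM D', laplaceMeasure_map_apply _ _ hS, laplaceMeasure_map_apply _ _ hS,
    ← lintegral_const_mul' _ _ ENNReal.ofReal_ne_top]
  apply lintegral_mono
  intro x
  dsimp only
  rw [← ENNReal.ofReal_mul (Real.exp_nonneg ε)]
  apply ENNReal.ofReal_le_ofReal
  set b := s / ε with hbdef
  have hc : (0:ℝ) < 2 * b := by linarith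
  have key : Real.exp (-|x - f D| / b) ≤ Real.exp ε * Real.exp (-|x - f D'| / b) := by
    rw [← Real.exp_add]
    apply Real.exp_le_exp.mpr
    have h1 : |x - f D'| - |x - f D| ≤ |f D - f D'| := by
      have := abs_sub_abs_le_abs_sub (x - f D') (x - f D)
      simpa [abs_sub_comm] using this
    have h2 : |f D - f D'| ≤ s := hsens D D' hN
    have hsb : s / b = ε := by rw [hbdef]; field_simp
    have h3 : (|x - f D'| - |x - f D|) / b ≤ ε := by
      rw [← hsb]; gcongr; exact h1.trans h2
    rw [sub_div] at h3
    rw [neg_div, neg_div]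
    linarith
  calc Real.exp (-|x - f D| / b) / (2 * b)
      ≤ Real.exp ε * Real.exp (-|x - f D'| / b) / (2 * b) :=
        div_le_div_of_nonneg_right key hc.le
    _ = Real.exp ε * (Real.exp (-|x - f D'| / b) / (2 * b)) := by ring
end
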